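/- Let a, b be distinct complex numbers, both different from 0 and from 1. Then the triple (R1, R2, R3) with R1 = 1/((1−a)²(1−b)²), R2 = a/((1−a)²(a−b)²), R3 = b/((1−b)²(a−b)²) is not triangular: there do not exist complex square roots r1, r2, r3 of R1, R2, R3 with r1 + r2 + r3 = 0. -/

import Mathlib

/-- The quadratic residues of `z (dz)²/((z−1)²(z−a)²(z−b)²)` are never triangular. -/
theorem stmt_5 (a b : ℂ) (hab : a ≠ b) (ha0 : a ≠ 0) (ha1 : a ≠ 1)
    (hb0 : b ≠ 0) (hb1 : b ≠ 1) :
    ¬ ∃ r1 r2 r3 : ℂ,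
        r1 ^ 2 = 1 / ((1 - a) ^ 2 * (1 - b) ^ 2) ∧
        r2 ^ 2 = a / ((1 - a) ^ 2 * (a - b) ^ 2) ∧
        r3 ^ 2 = b / ((1 - b) ^ 2 * (a - b) ^ 2) ∧
        r1 + r2 + r3 = 0 := by
  rintro ⟨r1, r2, r3, h1, h2, h3, hsum⟩
  have hx : (1 : ℂ) - a ≠ 0 := sub_ne_zero.mpr (fun h => ha1 h.symm)
  have hy : (1 : ℂ) - b ≠ 0 := sub_ne_zero.mpr (fun h => hb1 h.symm)
  have hz : a - b ≠ 0 := sub_ne_zero.mpr hab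
  have e : (r3 ^ 2 - r1 ^ 2 - r2 ^ 2) ^ 2 = 4 * (r1 ^ 2 * r2 ^ 2) := by
    have h : r3 = -(r1 + r2) := by linear_combination hsum
    rw [h]; ring
  rw [h1, h2, h3] at e
  field_simp at e
  have key : (1 - a) ^ 10 * (1 - b) ^ 8 * (a - b) ^ 8 = 0 := by linear_combination (1 - a) ^ 8 * (1 - b) ^ 6 * (a - b) ^ 6 * e
  exact mul_ne_zero (mul_ne_zero (pow_ne_zero _ hx) (pow_ne_zero _ hy)) (pow_ne_zero _ hz) key
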